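/- If a₁, ..., aₙ, c are n+1 real numbers (n ≥ 2) such that (∑ᵢ aᵢ)² = (n-1)(∑ᵢ aᵢ² + c), then 2a₁a₂ ≥ c. -/

import Mathlib

/-- Chen's algebraic lemma (inequality part): if `a₁, …, aₙ, c` are `n+1` real
numbers (`n ≥ 2`) with `(∑ᵢ aᵢ)² = (n-1)(∑ᵢ aᵢ² + c)`, then `2 a₁ a₂ ≥ c`. -/
theorem chen_lemma_ineq (n : ℕ) (hn : 2 ≤ n) (a : Fin n → ℝ) (c : ℝ)
    (h : (∑ i, a i) ^ 2 = (n - 1 : ℝ) * ((∑ i, (a i) ^ 2) + c)) :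
    2 * a ⟨0, by omega⟩ * a ⟨1, by omega⟩ ≥ c := by
  obtain ⟨m, rfl⟩ : ∃ m, n = m + 2 := ⟨n - 2, by omega⟩
  set g : Fin (m + 1) → ℝ := Fin.cons (a 0 + a 1) (fun i => a i.succ.succ) with hg
  have hsum : ∑ i, g i = ∑ i, a i := by
    rw [Fin.sum_univ_succ, Fin.sum_univ_succ (f := a), Fin.sum_univ_succ (f := fun i => a i.succ)]
    simp [hg, add_assoc]
  have hsq : ∑ i, (g i) ^ 2 = (a 0 + a 1) ^ 2 + ∑ i : Fin m, (a i.succ.succ) ^ 2 := by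
    rw [Fin.sum_univ_succ]
    simp [hg]
  have hsqa : ∑ i, (a i) ^ 2 = a 0 ^ 2 + a 1 ^ 2 + ∑ i : Fin m, (a i.succ.succ) ^ 2 := by
    rw [Fin.sum_univ_succ (f := fun i => (a i) ^ 2),
      Fin.sum_univ_succ (f := fun i => (a i.succ) ^ 2), Fin.succ_zero_eq_one]
    ring
  have cauchy := sq_sum_le_card_mul_sum_sq (s := Finset.univ) (f := g)
  simp only [Finset.card_univ, Fintype.card_fin, hsum, hsq] at cauchy
  have hcast : ((m : ℝ) + 2 - 1) = (m + 1 : ℕ) := by push_cast; ring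
  rw [h] at cauchy
  push_cast at cauchy
  have hpos : (0 : ℝ) < (m : ℝ) + 1 := by positivity
  have key : (∑ i, (a i) ^ 2) + c ≤ (a 0 + a 1) ^ 2 + ∑ i : Fin m, (a i.succ.succ) ^ 2 := by
    have := (mul_le_mul_iff_right₀ hpos).mp (by linarith : ((m:ℝ)+1) * ((∑ i, (a i) ^ 2) + c)
      ≤ ((m:ℝ)+1) * ((a 0 + a 1) ^ 2 + ∑ i : Fin m, (a i.succ.succ) ^ 2))
    exact this
  rw [hsqa] at key
  have h0 : (⟨0, by omega⟩ : Fin (m+2)) = 0 := rfl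
  have h1 : (⟨1, by omega⟩ : Fin (m+2)) = 1 := rfl
  rw [h0, h1]
  nlinarith [key]
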